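/- Let n ≥ 1 be an integer, let α < β be real numbers, let ζ_1,…,ζ_n be the Chebyshev nodes of the first kind in [−1,1], and let η_k = ((α−β)/2)·ζ_k + (α+β)/2 be the scaled nodes in [α,β]. Then for every x ∈ [α,β], Σ_{k=1}^{n} | 1/n + (2/n)·Σ_{m=1}^{n−1} T_m(ζ_k)·T_m((2x − (α+β))/(α−β)) | ≤ (2/π)·log(n) + 1; that is, the ℓ1 norm of the vector of scaled Chebyshev basis polynomials evaluated at any point of [α,β] is at most (2/π)log(n) + 1. -/

import Mathlib

set_option maxHeartbeats 1000000

open Real Finset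

/-- Chebyshev polynomial of the first kind of degree `m`, evaluated at `x`. -/
noncomputable def chebT (m : ℕ) (x : ℝ) : ℝ :=
  (Polynomial.Chebyshev.T ℝ m).eval x

/-- The `k`-th Chebyshev node of the first kind in `[-1, 1]` among `n` nodes,
for `1 ≤ k ≤ n`: `ζ_k = cos((2k−1)π/(2n))`. -/
noncomputable def chebNode (n k : ℕ) : ℝ :=
  Real.cos ((2 * (k : ℝ) - 1) * Real.pi / (2 * (n : ℝ)))

/-- The `k`-th scaled Chebyshev node on `[α, β]`:
`η_k = ((α−β)/2)·ζ_k + (α+β)/2`. -/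
noncomputable def scaledChebNode (n k : ℕ) (α β : ℝ) : ℝ :=
  ((α - β) / 2) * chebNode n k + (α + β) / 2

/-- The Chebyshev basis polynomial on `[α, β]`:
`φ^{[α,β]}(η_i, x) = 1/n + (2/n)·Σ_{m=1}^{n−1} T_m(ζ_i)·T_m((2x − (α+β))/(α−β))`. -/
noncomputable def scaledChebBasis (n i : ℕ) (α β : ℝ) (x : ℝ) : ℝ :=
  1 / (n : ℝ) + (2 / (n : ℝ)) *
    ∑ m ∈ Finset.Icc 1 (n - 1),
      chebT m (chebNode n i) * chebT m ((2 * x - (α + β)) / (α - β))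


private lemma mono_help {f f' : ℝ → ℝ} {a b : ℝ} (hab : a ≤ b)
    (hd : ∀ x ∈ Set.Icc a b, HasDerivAt f (f' x) x)
    (h0 : ∀ x ∈ Set.Icc a b, 0 ≤ f' x) : f a ≤ f b := by
  have hmono := monotoneOn_of_deriv_nonneg (convex_Icc a b)
    (fun x hx => (hd x hx).continuousAt.continuousWithinAt)
    (fun x hx => (hd x (interior_subset hx)).differentiableAt.differentiableWithinAt)
    (fun x hx => by
      rw [(hd x (interior_subset hx)).deriv]
      exact h0 x (interior_subset hx))
  exact hmono (Set.left_mem_Icc.2 hab) (Set.right_mem_Icc.2 hab) hab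

private lemma sin_sub_mul_cos_nonneg {x : ℝ} (hx : 0 ≤ x) (hx2 : x ≤ π) :
    0 ≤ sin x - x * cos x := by
  have key : (fun y => sin y - y * cos y) 0 ≤ (fun y => sin y - y * cos y) x :=
    mono_help (f' := fun z => z * sin z) hx
      (fun z hz => by
        have h1 : HasDerivAt (fun y : ℝ => sin y - y * cos y)
            (cos z - (1 * cos z + z * (-sin z))) z :=
          (Real.hasDerivAt_sin z).sub ((hasDerivAt_id z).mul (Real.hasDerivAt_cos z))
        convert h1 using 1; ring)
      (fun z hz => mul_nonneg hz.1 (sin_nonneg_of_nonneg_of_le_pi hz.1 (hz.2.trans hx2)))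
  simpa using key

private lemma cot_le_aux {x : ℝ} (hx : 0 < x) (hx2 : x ≤ π/2) :
    cos x / sin x ≤ 1/x - x/3 := by
  have hπ := pi_pos
  have hs : 0 < sin x := sin_pos_of_pos_of_lt_pi hx (by linarith)
  have hh : (0:ℝ) ≤ (3 - x^2) * sin x - 3 * x * cos x := by
    have key : (fun y => (3 - y^2) * sin y - 3 * y * cos y) 0
        ≤ (fun y => (3 - y^2) * sin y - 3 * y * cos y) x :=
      mono_help (f' := fun z => z * (sin z - z * cos z)) (le_of_lt hx)
        (fun z hz => by
          have ha : HasDerivAt (fun y : ℝ => (3 - y^2)) (0 - 2*z) z := by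
            simpa using ((hasDerivAt_pow 2 z).const_sub (3:ℝ))
          have hb : HasDerivAt (fun y : ℝ => 3 * y * cos y) (3 * cos z + 3 * z * (-sin z)) z := by
            have hb1 : HasDerivAt (fun y : ℝ => 3 * y) (3:ℝ) z := by
              simpa using (hasDerivAt_id z).const_mul (3:ℝ)
            have := hb1.mul (Real.hasDerivAt_cos z)
            exact this.congr_deriv (by beta_reduce; ring)
          have h1 := (ha.mul (Real.hasDerivAt_sin z)).sub hb
          exact h1.congr_deriv (by beta_reduce; ring)
        )
        (fun z hz => mul_nonneg hz.1 (sin_sub_mul_cos_nonneg hz.1 (by linarith [hz.2])))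
    simpa using key
  rw [div_le_iff₀ hs]
  have hx0 : x ≠ 0 := ne_of_gt hx
  have heq : (1/x - x/3) * sin x = ((3 - x^2) * sin x) / (3*x) := by
    field_simp
  rw [heq, le_div_iff₀ (by positivity)]
  nlinarith [hh]

private lemma log_ge_aux {t : ℝ} (h0 : 0 ≤ t) (h1 : t < 1) :
    2*t ≤ Real.log ((1+t)/(1-t)) := by
  have key : (fun y => Real.log (1+y) - Real.log (1-y) - 2*y) 0
      ≤ (fun y => Real.log (1+y) - Real.log (1-y) - 2*y) t :=
    mono_help (f' := fun z => 1/(1+z) - (-(1/(1-z))) - 2) h0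
      (fun z hz => by
        have hz1 : (0:ℝ) < 1 + z := by have := hz.1; linarith
        have hz2 : (0:ℝ) < 1 - z := by have := hz.2; linarith
        have ha : HasDerivAt (fun y : ℝ => Real.log (1+y)) (1/(1+z)) z := by
          have := (Real.hasDerivAt_log (ne_of_gt hz1)).comp z
            ((hasDerivAt_const z (1:ℝ)).add (hasDerivAt_id z))
          simpa [one_div, Function.comp_def] using this
        have hb : HasDerivAt (fun y : ℝ => Real.log (1-y)) (-(1/(1-z))) z := by
          have h2 := (Real.hasDerivAt_log (ne_of_gt hz2)).comp z
            ((hasDerivAt_const z (1:ℝ)).sub (hasDerivAt_id z))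
          have : (1-z)⁻¹ * (0 - 1) = -(1/(1-z)) := by field_simp; ring
          simpa [this, Function.comp_def] using h2
        have hc : HasDerivAt (fun y : ℝ => 2*y) (2:ℝ) z := by
          simpa using (hasDerivAt_id z).const_mul (2:ℝ)
        exact (ha.sub hb).sub hc)
      (fun z hz => by
        have hz1 : (0:ℝ) < 1 + z := by have := hz.1; linarith
        have hz2 : (0:ℝ) < 1 - z := by have := hz.2; linarith
        have heq : 1/(1+z) - (-(1/(1-z))) - 2 = 2*z^2/((1+z)*(1-z)) := by
          field_simp; ring
        show (0:ℝ) ≤ 1/(1+z) - (-(1/(1-z))) - 2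
        rw [heq]; positivity)
  simp only [add_zero, sub_zero, Real.log_one, mul_zero] at key
  have h1t : (0:ℝ) < 1 + t := by linarith
  have h2t : (0:ℝ) < 1 - t := by linarith
  rw [Real.log_div (ne_of_gt h1t) (ne_of_gt h2t)]
  linarith [key]

section S2



private lemma core2 (n : ℕ) (hn : 1 ≤ n) {e : ℝ} (h0 : 0 ≤ e) (h1 : e ≤ π/(4*n)) :
    sin e * sin (π/4) ≤ sin (n*e) * sin (π/(4*n)) := by
  have hπ := pi_pos
  have hn0 : (0:ℝ) < n := by exact_mod_cast hn
  rcases eq_or_lt_of_le hn with h|h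
  · have : (n:ℝ) = 1 := by exact_mod_cast h.symm
    rw [this]; norm_num
  · have hn2 : (2:ℝ) ≤ n := by exact_mod_cast h
    set N : ℝ := (n:ℝ) with hN
    set B : ℝ := π/(4*N) with hBdef
    have hB : 0 < B := by positivity
    have hNB : N * B = π/4 := by rw [hBdef]; field_simp
    have hB2 : B ≤ π/2 := by
      rw [hBdef, div_le_div_iff₀ (by positivity) (by norm_num)]
      nlinarith
    have hNy : ∀ y : ℝ, HasDerivAt (fun y : ℝ => N * y) N y := by
      intro y
      simpa using (hasDerivAt_id y).const_mul N
    have hg : ∀ y, HasDerivAt (fun y => sin (N*y) * sin B - sin y * sin (π/4))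
        (cos (N*y) * N * sin B - cos y * sin (π/4)) y := by
      intro y
      exact (((hNy y).sin).mul_const (sin B)).sub ((Real.hasDerivAt_sin y).mul_const (sin (π/4)))
    have hg1 : ∀ y, HasDerivAt (fun y => cos (N*y) * N * sin B - cos y * sin (π/4))
        (-sin (N*y) * N * N * sin B - -sin y * sin (π/4)) y := by
      intro y
      have h := (((hNy y).cos).mul_const N).mul_const (sin B) |>.sub
        ((Real.hasDerivAt_cos y).mul_const (sin (π/4)))
      exact h.congr_deriv (by ring)
    have hd1 : deriv (fun y => sin (N*y) * sin B - sin y * sin (π/4))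
        = fun y => cos (N*y) * N * sin B - cos y * sin (π/4) := funext fun y => (hg y).deriv
    have hd2 : deriv (fun y => cos (N*y) * N * sin B - cos y * sin (π/4))
        = fun y => -sin (N*y) * N * N * sin B - -sin y * sin (π/4) := funext fun y => (hg1 y).deriv
    have hconc : ConcaveOn ℝ (Set.Icc 0 B) (fun y => sin (N*y) * sin B - sin y * sin (π/4)) := by
      apply concaveOn_of_deriv2_nonpos (convex_Icc 0 B)
        (fun y _ => (hg y).continuousAt.continuousWithinAt)
        (fun y _ => (hg y).differentiableAt.differentiableWithinAt)
      · rw [hd1]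
        exact fun y _ => (hg1 y).differentiableAt.differentiableWithinAt
      · intro y hy
        rw [interior_Icc] at hy
        have hity : deriv^[2] (fun y => sin (N*y) * sin B - sin y * sin (π/4)) y
            = -sin (N*y) * N * N * sin B - -sin y * sin (π/4) := by
          show deriv (deriv (fun y => sin (N*y) * sin B - sin y * sin (π/4))) y = _
          rw [hd1, hd2]
        rw [hity]
        have hy1 : 0 < y := hy.1
        have hy2 : y < B := hy.2
        have hNyB : N * y ≤ π/4 := by nlinarith
        have hs1 : sin y ≤ sin (N*y) := by
          apply Real.strictMonoOn_sin.monotoneOn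
          · constructor <;> nlinarith
          · constructor <;> nlinarith
          · nlinarith
        have hsB' : 1/(2*N) ≤ sin B := by
          have hsB : 2/π * B ≤ sin B := Real.mul_le_sin (le_of_lt hB) hB2
          have hBval : 2/π * B = 1/(2*N) := by rw [hBdef]; field_simp; ring
          linarith [hBval ▸ hsB]
        have hs2 : (1:ℝ) ≤ N * N * sin B := by
          have h5 : N*N*(1/(2*N)) = N/2 := by field_simp
          nlinarith [mul_le_mul_of_nonneg_left hsB' (le_of_lt (mul_pos hn0 hn0))]
        have hsin4 : sin (π/4) ≤ 1 := sin_le_one _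
        have hsNy : 0 ≤ sin (N*y) := by
          apply sin_nonneg_of_nonneg_of_le_pi (by nlinarith)
          nlinarith
        have hsy : 0 ≤ sin y := sin_nonneg_of_nonneg_of_le_pi (le_of_lt hy1) (by nlinarith)
        nlinarith [mul_le_mul_of_nonneg_left hs2 hsNy]
    have hg0 : (fun y => sin (N*y) * sin B - sin y * sin (π/4)) 0 = 0 := by simp
    have hgB : (fun y => sin (N*y) * sin B - sin y * sin (π/4)) B = 0 := by
      simp only
      rw [hNB]; ring
    have hmem0 : (0:ℝ) ∈ Set.Icc (0:ℝ) B := Set.left_mem_Icc.2 (le_of_lt hB)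
    have hmemB : B ∈ Set.Icc (0:ℝ) B := Set.right_mem_Icc.2 (le_of_lt hB)
    have ha : 0 ≤ 1 - e/B := by
      have : e/B ≤ 1 := by rw [div_le_one hB]; exact h1
      linarith
    have hb : 0 ≤ e/B := by positivity
    have hab : (1 - e/B) + e/B = 1 := by ring
    have hcc := hconc.2 hmem0 hmemB ha hb hab
    have heq : (1 - e/B) • (0:ℝ) + (e/B) • B = e := by
      rw [smul_eq_mul, smul_eq_mul, mul_zero, zero_add]
      field_simp
    rw [heq, hg0, hgB, smul_eq_mul, smul_eq_mul, mul_zero, mul_zero, add_zero] at hcc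
    have : 0 ≤ sin (N*e) * sin B - sin e * sin (π/4) := by simpa using hcc
    linarith

private lemma pair_bound (n : ℕ) (hn : 1 ≤ n) {b ε : ℝ} (hb1 : π/(4*n) ≤ b)
    (hbe : b + ε ≤ π/2) (he0 : 0 ≤ ε) (he1 : ε ≤ π/(4*n)) (heb : ε < b) :
    cos (2*((n:ℝ)*ε)) * (cos (b-ε)/sin (b-ε) + cos (b+ε)/sin (b+ε)) ≤ 2 * (cos b/sin b) := by
  have hπ := pi_pos
  have hn0 : (0:ℝ) < n := by exact_mod_cast hn
  have hb0 : 0 < b := lt_of_le_of_lt' hb1 (by positivity)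
  have hbπ : b ≤ π/2 := by linarith
  have hsb : 0 < sin b := sin_pos_of_pos_of_lt_pi hb0 (by linarith)
  have hs1 : 0 < sin (b-ε) := sin_pos_of_pos_of_lt_pi (by linarith) (by linarith)
  have hs2 : 0 < sin (b+ε) := sin_pos_of_pos_of_lt_pi (by linarith) (by linarith)
  have hsum : cos (b-ε)/sin (b-ε) + cos (b+ε)/sin (b+ε)
      = sin (2*b) / (sin (b-ε) * sin (b+ε)) := by
    rw [div_add_div _ _ (ne_of_gt hs1) (ne_of_gt hs2)]
    congr 1
    have h := sin_add (b-ε) (b+ε)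
    have h2b : (b-ε)+(b+ε) = 2*b := by ring
    rw [h2b] at h
    linear_combination -h
  have hden : sin (b-ε) * sin (b+ε) = sin b^2 - sin ε^2 := by
    rw [sin_sub, sin_add]
    linear_combination (-(sin ε)^2) * sin_sq_add_cos_sq b + (sin b)^2 * sin_sq_add_cos_sq ε
  have hcos2 : cos (2*((n:ℝ)*ε)) = 1 - 2 * sin ((n:ℝ)*ε)^2 := by
    rw [cos_two_mul]
    linear_combination (2 : ℝ) * sin_sq_add_cos_sq ((n:ℝ)*ε)
  have hse : 0 ≤ sin ε := sin_nonneg_of_nonneg_of_le_pi he0 (by linarith)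
  have hnε4 : (n:ℝ)*ε ≤ π/4 := by
    have h4 : (n:ℝ)*(π/(4*n)) = π/4 := by field_simp
    nlinarith
  have hsnε : 0 ≤ sin ((n:ℝ)*ε) := by
    apply sin_nonneg_of_nonneg_of_le_pi (by positivity)
    nlinarith
  have hkey : sin ε * sin (π/4) ≤ sin ((n:ℝ)*ε) * sin b := by
    have h1 := core2 n hn he0 he1
    have h2 : sin (π/(4*n)) ≤ sin b := by
      have hq : (0:ℝ) < π/(4*(n:ℝ)) := by positivity
      apply Real.strictMonoOn_sin.monotoneOn
      · constructor <;> linarith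
      · constructor <;> linarith
      · exact hb1
    calc sin ε * sin (π/4) ≤ sin ((n:ℝ)*ε) * sin (π/(4*n)) := h1
    _ ≤ sin ((n:ℝ)*ε) * sin b := by nlinarith
  have hsq : sin ε^2 ≤ 2 * (sin ((n:ℝ)*ε)^2 * sin b^2) := by
    have hs4 : (0:ℝ) ≤ sin (π/4) := sin_nonneg_of_nonneg_of_le_pi (by positivity) (by linarith)
    have h4 : 0 ≤ sin ε * sin (π/4) := mul_nonneg hse hs4
    have hsq2 := mul_self_le_mul_self h4 hkey
    have h2 : (Real.sqrt 2)^2 = 2 := Real.sq_sqrt (by norm_num)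
    rw [sin_pi_div_four] at hsq2
    nlinarith [hsq2]
  have hpos : 0 < sin b^2 - sin ε^2 := by
    have : sin ε < sin b := by
      apply Real.strictMonoOn_sin
      · constructor <;> linarith
      · constructor <;> linarith
      · exact heb
    nlinarith
  have hs2b : 0 ≤ sin (2*b) := sin_nonneg_of_nonneg_of_le_pi (by linarith) (by linarith)
  have hc2 : cos (2*((n:ℝ)*ε)) * sin b^2 ≤ sin b^2 - sin ε^2 := by
    rw [hcos2]; nlinarith [hsq]
  rw [hsum, hden]
  have hrhs : 2 * (cos b/sin b) = sin (2*b) / sin b^2 := by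
    rw [sin_two_mul]
    field_simp
  rw [hrhs, mul_div_assoc', div_le_div_iff₀ hpos (by positivity)]
  nlinarith [mul_le_mul_of_nonneg_left hc2 hs2b]

end S2

section S3



private lemma tele (θ ψ : ℝ) : ∀ N : ℕ,
    (1 + 2 * ∑ m ∈ Finset.Icc 1 N, cos ((m:ℝ)*ψ) * cos ((m:ℝ)*θ)) * (cos θ - cos ψ)
    = cos (((N:ℝ)+1)*θ) * cos ((N:ℝ)*ψ) - cos ((N:ℝ)*θ) * cos (((N:ℝ)+1)*ψ) := by
  intro N
  induction N with
  | zero => simp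
  | succ N ih =>
    rw [Finset.sum_Icc_succ_top (by omega : 1 ≤ N + 1)]
    push_cast
    have hcθ : cos (((N:ℝ)+1+1)*θ) = cos (((N:ℝ)+1)*θ)*cos θ - sin (((N:ℝ)+1)*θ)*sin θ := by
      rw [show ((N:ℝ)+1+1)*θ = ((N:ℝ)+1)*θ + θ by ring, cos_add]
    have hcθ' : cos ((N:ℝ)*θ) = cos (((N:ℝ)+1)*θ)*cos θ + sin (((N:ℝ)+1)*θ)*sin θ := by
      rw [show ((N:ℝ))*θ = ((N:ℝ)+1)*θ - θ by ring, cos_sub]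
    have hcψ : cos (((N:ℝ)+1+1)*ψ) = cos (((N:ℝ)+1)*ψ)*cos ψ - sin (((N:ℝ)+1)*ψ)*sin ψ := by
      rw [show ((N:ℝ)+1+1)*ψ = ((N:ℝ)+1)*ψ + ψ by ring, cos_add]
    have hcψ' : cos ((N:ℝ)*ψ) = cos (((N:ℝ)+1)*ψ)*cos ψ + sin (((N:ℝ)+1)*ψ)*sin ψ := by
      rw [show ((N:ℝ))*ψ = ((N:ℝ)+1)*ψ - ψ by ring, cos_sub]
    linear_combination ih - cos (((N:ℝ)+1)*ψ) * hcθ - cos (((N:ℝ)+1)*ψ) * hcθ'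
      + cos (((N:ℝ)+1)*θ) * hcψ + cos (((N:ℝ)+1)*θ) * hcψ'

private lemma half_tele (φ : ℝ) : ∀ N : ℕ,
    (∑ m ∈ Finset.Icc 1 N, 2 * cos ((m:ℝ)*φ)) * sin (φ/2)
    = sin (((N:ℝ)+1/2)*φ) - sin (φ/2) := by
  intro N
  induction N with
  | zero =>
    rw [show Finset.Icc 1 0 = (∅ : Finset ℕ) by rfl, Finset.sum_empty,
      show (((0:ℕ):ℝ)+1/2)*φ = φ/2 by push_cast; ring]
    ring
  | succ N ih =>
    rw [Finset.sum_Icc_succ_top (by omega : 1 ≤ N + 1)]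
    push_cast
    have hs1 : sin (((N:ℝ)+1+1/2)*φ) = sin (((N:ℝ)+1)*φ)*cos (φ/2) + cos (((N:ℝ)+1)*φ)*sin (φ/2) := by
      rw [show ((N:ℝ)+1+1/2)*φ = ((N:ℝ)+1)*φ + φ/2 by ring, sin_add]
    have hs2 : sin (((N:ℝ)+1/2)*φ) = sin (((N:ℝ)+1)*φ)*cos (φ/2) - cos (((N:ℝ)+1)*φ)*sin (φ/2) := by
      rw [show ((N:ℝ)+1/2)*φ = ((N:ℝ)+1)*φ - φ/2 by ring, sin_sub]
    linear_combination ih - hs1 + hs2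

private lemma shift_sum (p : ℤ) (hp : 0 < p) (f : ℤ → ℝ) (hf : ∀ m, f (m + p) = f m) :
    ∀ a : ℤ, ∑ m ∈ Finset.Ico a (a+p), f m = ∑ m ∈ Finset.Ico 0 p, f m := by
  have step : ∀ a : ℤ, ∑ m ∈ Finset.Ico (a+1) (a+1+p), f m = ∑ m ∈ Finset.Ico a (a+p), f m := by
    intro a
    have h1 : Finset.Ico a (a+p) = insert a (Finset.Ico (a+1) (a+p)) := by
      ext m; simp only [Finset.mem_Ico, Finset.mem_insert]; omega
    have h2 : Finset.Ico (a+1) (a+1+p) = insert (a+p) (Finset.Ico (a+1) (a+p)) := by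
      ext m; simp only [Finset.mem_Ico, Finset.mem_insert]; omega
    have hni1 : a ∉ Finset.Ico (a+1) (a+p) := by simp
    have hni2 : (a+p) ∉ Finset.Ico (a+1) (a+p) := by simp
    rw [h1, h2, Finset.sum_insert hni1, Finset.sum_insert hni2, hf a]
  intro a
  induction a using Int.induction_on with
  | zero => norm_num
  | succ i ih => rw [step i]; exact ih
  | pred i ih =>
    have := step (-(i:ℤ) - 1)
    simp only [sub_add_cancel] at this
    rw [← this]; exact ih

private lemma sum_odd (n : ℕ) : ∑ m ∈ range n, (2*(m:ℝ)+1) = (n:ℝ)^2 := by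
  induction n with
  | zero => simp
  | succ N ih => rw [Finset.sum_range_succ, ih]; push_cast; ring

private lemma harmonic_odd (n : ℕ) (hn : 2 ≤ n) :
    ∑ m ∈ range n, 1/(2*(m:ℝ)+1) ≤ (1/2) * Real.log n + (π/4 + π^2/48) := by
  induction n, hn using Nat.le_induction with
  | base =>
    have hsum2 : ∑ m ∈ range 2, 1/(2*(m:ℝ)+1) = 1 + 1/3 := by
      norm_num [Finset.sum_range_succ]
    rw [hsum2, show ((2:ℕ):ℝ) = (2:ℝ) by norm_num]
    have hpi := Real.pi_gt_d6
    have hlog := Real.log_two_gt_d9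
    have hpi2 : (3.141592:ℝ)^2 ≤ π^2 := by nlinarith
    nlinarith
  | succ N hN ih =>
    rw [Finset.sum_range_succ]
    have hstep : 1/(2*(N:ℝ)+1) ≤ (1/2) * (Real.log (N+1) - Real.log N) := by
      have hN1 : (0:ℝ) < N := by exact_mod_cast Nat.lt_of_lt_of_le (by norm_num) hN
      have ht0 : (0:ℝ) ≤ 1/(2*(N:ℝ)+1) := by positivity
      have ht1 : 1/(2*(N:ℝ)+1) < 1 := by
        rw [div_lt_one (by linarith)]; linarith
      have := log_ge_aux ht0 ht1
      have harg : (1+1/(2*(N:ℝ)+1))/(1-1/(2*(N:ℝ)+1)) = ((N:ℝ)+1)/N := by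
        field_simp
        ring
      rw [harg] at this
      rw [Real.log_div (by positivity) (ne_of_gt hN1)] at this
      linarith
    have hcast : Real.log ((N:ℝ)+1) = Real.log ((N+1:ℕ):ℝ) := by push_cast; ring_nf
    calc ∑ m ∈ range N, 1/(2*(m:ℝ)+1) + 1/(2*(N:ℝ)+1)
        ≤ ((1/2) * Real.log N + (π/4 + π^2/48)) + (1/2) * (Real.log (N+1) - Real.log N) := by
          linarith [ih]
    _ = (1/2) * Real.log ((N:ℝ)+1) + (π/4 + π^2/48) := by ring
    _ = (1/2) * Real.log ((N+1:ℕ):ℝ) + (π/4 + π^2/48) := by rw [hcast]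

private lemma static_bound (n : ℕ) (hn : 1 ≤ n) :
    ∑ m ∈ range n, cos ((2*(m:ℝ)+1)*π/(4*n)) / sin ((2*(m:ℝ)+1)*π/(4*n))
    ≤ (n:ℝ) * ((2/π) * Real.log n + 1) := by
  have hπ := pi_pos
  have hn0 : (0:ℝ) < n := by exact_mod_cast hn
  rcases eq_or_lt_of_le hn with h|h
  · -- n = 1
    have h1 : n = 1 := h.symm
    subst h1
    have he : (2*((0:ℕ):ℝ)+1)*π/(4*((1:ℕ):ℝ)) = π/4 := by norm_num
    rw [Finset.sum_range_one, he, cos_pi_div_four, sin_pi_div_four]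
    have h2 : Real.sqrt 2/2 ≠ 0 := by positivity
    rw [div_self h2]
    simp [Real.log_one]
  · have hn2 : 2 ≤ n := h
    have hterm : ∀ m ∈ range n, cos ((2*(m:ℝ)+1)*π/(4*n)) / sin ((2*(m:ℝ)+1)*π/(4*n))
        ≤ (4*(n:ℝ)/π) * (1/(2*(m:ℝ)+1)) - (π/(12*n)) * (2*(m:ℝ)+1) := by
      intro m hm
      rw [Finset.mem_range] at hm
      have hm1 : (m:ℝ) ≤ (n:ℝ) - 1 := by
        have : (m:ℝ) + 1 ≤ (n:ℝ) := by exact_mod_cast hm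
        linarith
      have hb0 : 0 < (2*(m:ℝ)+1)*π/(4*n) := by positivity
      have hb2 : (2*(m:ℝ)+1)*π/(4*n) ≤ π/2 := by
        rw [div_le_div_iff₀ (by positivity) (by norm_num)]
        nlinarith
      have := cot_le_aux hb0 hb2
      have heq1 : 1/((2*(m:ℝ)+1)*π/(4*n)) = (4*(n:ℝ)/π) * (1/(2*(m:ℝ)+1)) := by
        rw [one_div, one_div]
        field_simp
      have heq2 : ((2*(m:ℝ)+1)*π/(4*n))/3 = (π/(12*n)) * (2*(m:ℝ)+1) := by
        field_simp; ring
      rw [heq1, heq2] at this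
      exact this
    calc ∑ m ∈ range n, cos ((2*(m:ℝ)+1)*π/(4*n)) / sin ((2*(m:ℝ)+1)*π/(4*n))
        ≤ ∑ m ∈ range n, ((4*(n:ℝ)/π) * (1/(2*(m:ℝ)+1)) - (π/(12*n)) * (2*(m:ℝ)+1)) :=
          Finset.sum_le_sum hterm
    _ = (4*(n:ℝ)/π) * (∑ m ∈ range n, 1/(2*(m:ℝ)+1)) - (π/(12*n)) * ((n:ℝ)^2) := by
        rw [Finset.sum_sub_distrib, ← Finset.mul_sum, ← Finset.mul_sum, sum_odd]
    _ ≤ (4*(n:ℝ)/π) * ((1/2) * Real.log n + (π/4 + π^2/48)) - (π/(12*n)) * ((n:ℝ)^2) := by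
        have hH := harmonic_odd n hn2
        have hc : (0:ℝ) ≤ 4*(n:ℝ)/π := by positivity
        nlinarith [mul_le_mul_of_nonneg_left hH hc]
    _ = (n:ℝ) * ((2/π) * Real.log n + 1) := by
        field_simp
        ring

end S3

section S4
variable {n : ℕ}

private lemma thetaK_pos {k : ℕ} (hn : 1 ≤ n) (hk1 : 1 ≤ k) :
    0 < (2*(k:ℝ)-1)*π/(2*(n:ℝ)) := by
  have hπ := pi_pos
  have hn0 : (0:ℝ) < n := by exact_mod_cast hn
  have hk : (1:ℝ) ≤ k := by exact_mod_cast hk1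
  apply div_pos (by nlinarith) (by linarith)

private lemma thetaK_lt_pi {k : ℕ} (hn : 1 ≤ n) (hk2 : k ≤ n) :
    (2*(k:ℝ)-1)*π/(2*(n:ℝ)) < π := by
  have hπ := pi_pos
  have hn0 : (0:ℝ) < n := by exact_mod_cast hn
  have hk : (k:ℝ) ≤ n := by exact_mod_cast hk2
  rw [div_lt_iff₀ (by linarith)]
  nlinarith

private lemma cos_n_thetaK (hn : 1 ≤ n) (k : ℕ) :
    cos ((n:ℝ) * ((2*(k:ℝ)-1)*π/(2*(n:ℝ)))) = 0 := by
  have hn0 : (n:ℝ) ≠ 0 := Nat.cast_ne_zero.2 (by omega)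
  rw [show (n:ℝ) * ((2*(k:ℝ)-1)*π/(2*(n:ℝ))) = (k:ℝ)*π - π/2 by field_simp]
  rw [cos_sub, cos_pi_div_two, sin_pi_div_two, Real.sin_nat_mul_pi]
  ring

private lemma abs_sin_n_thetaK (hn : 1 ≤ n) (k : ℕ) :
    |sin ((n:ℝ) * ((2*(k:ℝ)-1)*π/(2*(n:ℝ))))| = 1 := by
  have h1 := sin_sq_add_cos_sq ((n:ℝ) * ((2*(k:ℝ)-1)*π/(2*(n:ℝ))))
  rw [cos_n_thetaK hn k] at h1
  have h2 : (sin ((n:ℝ) * ((2*(k:ℝ)-1)*π/(2*(n:ℝ)))) - 1)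
      * (sin ((n:ℝ) * ((2*(k:ℝ)-1)*π/(2*(n:ℝ)))) + 1) = 0 := by nlinarith
  rcases mul_eq_zero.1 h2 with h|h
  · rw [show sin ((n:ℝ) * ((2*(k:ℝ)-1)*π/(2*(n:ℝ)))) = 1 by linarith]; norm_num
  · rw [show sin ((n:ℝ) * ((2*(k:ℝ)-1)*π/(2*(n:ℝ)))) = -1 by linarith]; norm_num

private lemma abs_cos_nsub1_thetaK (hn : 1 ≤ n) {k : ℕ} (hk1 : 1 ≤ k) (hk2 : k ≤ n) :
    |cos (((n:ℝ)-1) * ((2*(k:ℝ)-1)*π/(2*(n:ℝ))))| = sin ((2*(k:ℝ)-1)*π/(2*(n:ℝ))) := by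
  have heq : cos (((n:ℝ)-1) * ((2*(k:ℝ)-1)*π/(2*(n:ℝ))))
      = sin ((n:ℝ) * ((2*(k:ℝ)-1)*π/(2*(n:ℝ)))) * sin ((2*(k:ℝ)-1)*π/(2*(n:ℝ))) := by
    rw [show ((n:ℝ)-1) * ((2*(k:ℝ)-1)*π/(2*(n:ℝ)))
      = (n:ℝ) * ((2*(k:ℝ)-1)*π/(2*(n:ℝ))) - (2*(k:ℝ)-1)*π/(2*(n:ℝ)) by ring, cos_sub,
      cos_n_thetaK hn k]
    ring
  rw [heq, abs_mul, abs_sin_n_thetaK hn k, one_mul, abs_of_nonneg]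
  exact le_of_lt (sin_pos_of_pos_of_lt_pi (thetaK_pos hn hk1) (thetaK_lt_pi hn hk2))

private lemma g_identity (hn : 1 ≤ n) (k : ℕ) (θ : ℝ) :
    ((n:ℝ) * (1/(n:ℝ) + (2/(n:ℝ)) * ∑ m ∈ Finset.Icc 1 (n-1),
        cos ((m:ℝ) * ((2*(k:ℝ)-1)*π/(2*(n:ℝ)))) * cos ((m:ℝ)*θ)))
      * (cos θ - cos ((2*(k:ℝ)-1)*π/(2*(n:ℝ))))
    = cos ((n:ℝ)*θ) * cos (((n:ℝ)-1) * ((2*(k:ℝ)-1)*π/(2*(n:ℝ)))) := by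
  have hn0 : (n:ℝ) ≠ 0 := Nat.cast_ne_zero.2 (by omega)
  have h1 : (n:ℝ) * (1/(n:ℝ) + (2/(n:ℝ)) * ∑ m ∈ Finset.Icc 1 (n-1),
      cos ((m:ℝ) * ((2*(k:ℝ)-1)*π/(2*(n:ℝ)))) * cos ((m:ℝ)*θ))
      = 1 + 2 * ∑ m ∈ Finset.Icc 1 (n-1),
      cos ((m:ℝ) * ((2*(k:ℝ)-1)*π/(2*(n:ℝ)))) * cos ((m:ℝ)*θ) := by
    rw [mul_add, ← mul_assoc, show (n:ℝ) * (2/(n:ℝ)) = 2 by field_simp,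
      show (n:ℝ) * (1/(n:ℝ)) = 1 by field_simp]
  rw [h1, tele θ ((2*(k:ℝ)-1)*π/(2*(n:ℝ))) (n-1)]
  have hc : ((n-1:ℕ):ℝ) = (n:ℝ) - 1 := by
    rw [Nat.cast_sub hn]; norm_num
  rw [hc, show (n:ℝ)-1+1 = (n:ℝ) by ring, cos_n_thetaK hn k]
  ring

end S4

section S4B
variable {n : ℕ}

private lemma per_k (hn : 1 ≤ n) {k : ℕ} (hk1 : 1 ≤ k) (hk2 : k ≤ n) {θ : ℝ}
    (hθ0 : 0 ≤ θ) (hθπ : θ ≤ π) (hne : θ ≠ (2*(k:ℝ)-1)*π/(2*(n:ℝ))) :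
    |1/(n:ℝ) + (2/(n:ℝ)) * ∑ m ∈ Finset.Icc 1 (n-1),
        cos ((m:ℝ) * ((2*(k:ℝ)-1)*π/(2*(n:ℝ)))) * cos ((m:ℝ)*θ)|
    ≤ |cos ((n:ℝ)*θ)|/(2*(n:ℝ)) *
      (|cos ((θ - (2*(k:ℝ)-1)*π/(2*(n:ℝ)))/2)|/|sin ((θ - (2*(k:ℝ)-1)*π/(2*(n:ℝ)))/2)|
       + |cos ((θ + (2*(k:ℝ)-1)*π/(2*(n:ℝ)))/2)|/|sin ((θ + (2*(k:ℝ)-1)*π/(2*(n:ℝ)))/2)|) := by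
  have hπ := pi_pos
  have hn0 : (0:ℝ) < n := by exact_mod_cast hn
  set ψ : ℝ := (2*(k:ℝ)-1)*π/(2*(n:ℝ)) with hψdef
  set g : ℝ := 1/(n:ℝ) + (2/(n:ℝ)) * ∑ m ∈ Finset.Icc 1 (n-1),
      cos ((m:ℝ) * ψ) * cos ((m:ℝ)*θ) with hgdef
  set u : ℝ := (θ - ψ)/2 with hudef
  set u' : ℝ := (θ + ψ)/2 with hu'def
  have hψ0 : 0 < ψ := thetaK_pos hn hk1
  have hψπ : ψ < π := thetaK_lt_pi hn hk2
  have hu'0 : 0 < u' := by rw [hu'def]; positivity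
  have hu'π : u' < π := by rw [hu'def]; linarith
  have hsu' : 0 < sin u' := sin_pos_of_pos_of_lt_pi hu'0 hu'π
  have huabs : |u| < π/2 := by
    rw [hudef, abs_div, abs_of_pos (by norm_num : (0:ℝ) < 2)]
    rw [div_lt_iff₀ (by norm_num : (0:ℝ) < 2)]
    rw [abs_lt]
    constructor <;> linarith
  have hune : u ≠ 0 := by
    rw [hudef]
    intro hcon
    apply hne
    have : θ - ψ = 0 := by linarith [hcon]
    linarith
  have hsu : 0 < |sin u| := by
    rcases lt_trichotomy u 0 with h|h|h
    · have h2 : 0 < sin (-u) := sin_pos_of_pos_of_lt_pi (by linarith) (by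
        have := abs_lt.1 huabs; linarith)
      rw [sin_neg] at h2
      rw [abs_pos]
      linarith
    · exact absurd h hune
    · rw [abs_pos]
      have := sin_pos_of_pos_of_lt_pi h (by have := abs_lt.1 huabs; linarith)
      linarith
  -- identity
  have e1 := g_identity hn k θ
  rw [← hψdef, ← hgdef] at e1
  have habs : (n:ℝ) * |g| * |cos θ - cos ψ| = |cos ((n:ℝ)*θ)| * sin ψ := by
    have h2 := congrArg abs e1
    rw [abs_mul, abs_mul, abs_of_pos hn0, abs_mul] at h2
    rw [abs_cos_nsub1_thetaK hn hk1 hk2] at h2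
    rw [← hψdef] at h2
    exact h2
  have hcd : |cos θ - cos ψ| = 2 * (|sin u'| * |sin u|) := by
    rw [cos_sub_cos, hudef, hu'def, abs_mul, abs_mul]
    rw [show |(-2:ℝ)| = 2 by norm_num]
    ring
  have hsink : sin ψ ≤ |cos u| * |sin u'| + |cos u'| * |sin u| := by
    have hexp : sin ψ = sin u' * cos u - cos u' * sin u := by
      rw [show ψ = u' - u by rw [hudef, hu'def]; ring, sin_sub]
    rw [hexp]
    calc sin u' * cos u - cos u' * sin u ≤ |sin u' * cos u - cos u' * sin u| := le_abs_self _
    _ ≤ |sin u' * cos u| + |cos u' * sin u| := abs_sub _ _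
    _ = |cos u| * |sin u'| + |cos u'| * |sin u| := by rw [abs_mul, abs_mul]; ring
  have hgoal_eq : |cos ((n:ℝ)*θ)|/(2*(n:ℝ)) * (|cos u|/|sin u| + |cos u'|/|sin u'|)
      = (|cos ((n:ℝ)*θ)| * (|cos u| * |sin u'| + |cos u'| * |sin u|))
        / ((2*(n:ℝ)) * (|sin u| * |sin u'|)) := by
    field_simp
  rw [hgoal_eq, le_div_iff₀ (by
    apply mul_pos (by positivity)
    exact mul_pos hsu (abs_pos.2 (ne_of_gt hsu')))]
  calc |g| * (2*(n:ℝ) * (|sin u| * |sin u'|))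
      = (n:ℝ) * |g| * (2 * (|sin u'| * |sin u|)) := by ring
  _ = |cos ((n:ℝ)*θ)| * sin ψ := by rw [← hcd]; exact habs
  _ ≤ |cos ((n:ℝ)*θ)| * (|cos u| * |sin u'| + |cos u'| * |sin u|) :=
      mul_le_mul_of_nonneg_left hsink (abs_nonneg _)

private lemma node_case (hn : 1 ≤ n) {j : ℕ} (hj1 : 1 ≤ j) (hj2 : j ≤ n) :
    ∑ k ∈ Finset.Icc 1 n, |1/(n:ℝ) + (2/(n:ℝ)) * ∑ m ∈ Finset.Icc 1 (n-1),
        cos ((m:ℝ) * ((2*(k:ℝ)-1)*π/(2*(n:ℝ)))) * cos ((m:ℝ)*((2*(j:ℝ)-1)*π/(2*(n:ℝ))))| = 1 := by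
  have hπ := pi_pos
  have hn0 : (0:ℝ) < n := by exact_mod_cast hn
  have hnne : (n:ℝ) ≠ 0 := ne_of_gt hn0
  set ψj : ℝ := (2*(j:ℝ)-1)*π/(2*(n:ℝ)) with hψjdef
  have hψj0 : 0 < ψj := thetaK_pos hn hj1
  have hψjπ : ψj < π := thetaK_lt_pi hn hj2
  have hsinψj : 0 < sin ψj := sin_pos_of_pos_of_lt_pi hψj0 hψjπ
  rw [Finset.sum_eq_single_of_mem j (Finset.mem_Icc.2 ⟨hj1, hj2⟩)]
  · -- |g j| = 1
    have hcossum : ∑ m ∈ Finset.Icc 1 (n-1), cos ((m:ℝ)*(2*ψj)) = 0 := by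
      have ht := half_tele (2*ψj) (n-1)
      have hc : ((n-1:ℕ):ℝ) = (n:ℝ) - 1 := by rw [Nat.cast_sub hn]; norm_num
      rw [hc] at ht
      have harg : ((n:ℝ)-1+1/2)*(2*ψj) = (2*(j:ℝ)-1)*π - ψj := by
        rw [hψjdef]; field_simp; ring
      rw [harg] at ht
      have hsin1 : sin ((2*(j:ℝ)-1)*π - ψj) = sin ψj := by
        rw [sin_sub]
        have h1 : sin ((2*(j:ℝ)-1)*π) = 0 := by
          rw [show (2*(j:ℝ)-1)*π = ((2*(j:ℤ)-1 : ℤ):ℝ)*π by push_cast; ring]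
          exact Real.sin_int_mul_pi _
        have h2 : cos ((2*(j:ℝ)-1)*π) = -1 := by
          rw [show (2*(j:ℝ)-1)*π = (j:ℝ)*(2*π) - π by ring, cos_sub]
          rw [Real.cos_nat_mul_two_pi, Real.sin_pi, Real.cos_pi]
          ring
        rw [h1, h2]
        ring
      rw [hsin1, show (2*ψj)/2 = ψj by ring] at ht
      have h3 : (∑ m ∈ Finset.Icc 1 (n-1), 2 * cos ((m:ℝ)*(2*ψj))) * sin ψj = 0 := by
        rw [ht]; ring
      have h4 : (∑ m ∈ Finset.Icc 1 (n-1), 2 * cos ((m:ℝ)*(2*ψj))) = 0 :=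
        by
          rcases mul_eq_zero.1 h3 with h|h
          · exact h
          · exact absurd h (ne_of_gt hsinψj)
      have h5 : ∑ m ∈ Finset.Icc 1 (n-1), 2 * cos ((m:ℝ)*(2*ψj))
          = 2 * ∑ m ∈ Finset.Icc 1 (n-1), cos ((m:ℝ)*(2*ψj)) := by
        rw [Finset.mul_sum]
      rw [h5] at h4
      linarith
    have hsq : ∑ m ∈ Finset.Icc 1 (n-1), cos ((m:ℝ)*ψj) * cos ((m:ℝ)*ψj)
        = ((n:ℝ)-1)/2 := by
      have hterm : ∀ m ∈ Finset.Icc 1 (n-1), cos ((m:ℝ)*ψj) * cos ((m:ℝ)*ψj)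
          = 1/2 + cos ((m:ℝ)*(2*ψj))/2 := by
        intro m _
        have := Real.cos_sq ((m:ℝ)*ψj)
        rw [show 2*((m:ℝ)*ψj) = (m:ℝ)*(2*ψj) by ring] at this
        linear_combination this
      rw [Finset.sum_congr rfl hterm, Finset.sum_add_distrib, Finset.sum_const,
        Nat.card_Icc, nsmul_eq_mul]
      have hcard : ((n - 1 + 1 - 1 : ℕ):ℝ) = (n:ℝ) - 1 := by
        rw [show n - 1 + 1 - 1 = n - 1 by omega, Nat.cast_sub hn]; norm_num
      rw [hcard]
      have : ∑ m ∈ Finset.Icc 1 (n-1), cos ((m:ℝ)*(2*ψj))/2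
          = (∑ m ∈ Finset.Icc 1 (n-1), cos ((m:ℝ)*(2*ψj)))/2 := by
        rw [Finset.sum_div]
      rw [this, hcossum]
      ring
    rw [hsq]
    have : 1/(n:ℝ) + (2/(n:ℝ)) * (((n:ℝ)-1)/2) = 1 := by field_simp; ring
    rw [this]
    norm_num
  · -- off-diagonal terms vanish
    intro k hk hkj
    rw [Finset.mem_Icc] at hk
    have hk1 := hk.1
    have hk2 := hk.2
    set ψk : ℝ := (2*(k:ℝ)-1)*π/(2*(n:ℝ)) with hψkdef
    have e1 := g_identity hn k ψj
    rw [← hψkdef] at e1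
    have hcos0 : cos ((n:ℝ) * ψj) = 0 := by rw [hψjdef]; exact cos_n_thetaK hn j
    rw [hcos0, zero_mul] at e1
    have hcne : cos ψj - cos ψk ≠ 0 := by
      intro hcon
      have hne3 : ψj ≠ ψk := by
        rw [hψjdef, hψkdef]
        intro hcc
        rw [div_left_inj' (by positivity), mul_left_inj' Real.pi_ne_zero] at hcc
        have hkj' : (k:ℝ) = j := by linarith
        exact hkj (by exact_mod_cast hkj')
      exact hne3 (Real.injOn_cos
        (Set.mem_Icc.2 ⟨le_of_lt hψj0, le_of_lt hψjπ⟩)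
        (Set.mem_Icc.2 ⟨le_of_lt (thetaK_pos hn hk1), le_of_lt (thetaK_lt_pi hn hk2)⟩)
        (by linarith : cos ψj = cos ψk))
    have hg0 : (n:ℝ) * (1/(n:ℝ) + (2/(n:ℝ)) * ∑ m ∈ Finset.Icc 1 (n-1),
        cos ((m:ℝ) * ψk) * cos ((m:ℝ)*ψj)) = 0 := by
      rcases mul_eq_zero.1 e1 with h|h
      · exact h
      · exact absurd h hcne
    have : 1/(n:ℝ) + (2/(n:ℝ)) * ∑ m ∈ Finset.Icc 1 (n-1),
        cos ((m:ℝ) * ψk) * cos ((m:ℝ)*ψj) = 0 := by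
      rcases mul_eq_zero.1 hg0 with h|h
      · exact absurd h hnne
      · exact h
    rw [this]
    norm_num

end S4B

section S5
variable {n : ℕ}

private lemma per_s (hn : 1 ≤ n) {δ b : ℝ} (hεlt : |δ|/2 < π/(4*(n:ℝ)))
    (hb1 : π/(4*(n:ℝ)) ≤ b) (hbe : b + |δ|/2 ≤ π/2) :
    cos (2*((n:ℝ)*(|δ|/2))) *
      (|cos (b + δ/2)|/|sin (b + δ/2)| + |cos (b - δ/2)|/|sin (b - δ/2)|)
    ≤ 2 * (cos b / sin b) := by
  have hπ := pi_pos
  have hn0 : (0:ℝ) < n := by exact_mod_cast hn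
  have he0 : 0 ≤ |δ|/2 := by positivity
  have heb : |δ|/2 < b := lt_of_lt_of_le hεlt hb1
  have habs3 : ∀ y:ℝ, 0 < y → y ≤ π/2 → |cos y|/|sin y| = cos y/sin y := by
    intro y hy1 hy2
    rw [abs_of_nonneg (cos_nonneg_of_mem_Icc ⟨by linarith, hy2⟩),
      abs_of_pos (sin_pos_of_pos_of_lt_pi hy1 (by linarith))]
  have hswap : |cos (b + δ/2)|/|sin (b + δ/2)| + |cos (b - δ/2)|/|sin (b - δ/2)|
      = cos (b - |δ|/2)/sin (b - |δ|/2) + cos (b + |δ|/2)/sin (b + |δ|/2) := by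
    rcases abs_cases δ with ⟨h1,_⟩|⟨h1,_⟩
    · rw [show b + δ/2 = b + |δ|/2 by rw [h1], show b - δ/2 = b - |δ|/2 by rw [h1]]
      rw [habs3 _ (by linarith) (by linarith), habs3 _ (by linarith) (by linarith)]
      try ring
    · rw [show b + δ/2 = b - |δ|/2 by rw [h1]; ring, show b - δ/2 = b + |δ|/2 by rw [h1]; ring]
      rw [habs3 _ (by linarith) (by linarith), habs3 _ (by linarith) (by linarith)]
      try ring
  rw [hswap]
  exact pair_bound n hn hb1 hbe he0 (le_of_lt hεlt) heb

private lemma main_core (hn : 1 ≤ n) {θ : ℝ} (hθ0 : 0 ≤ θ) (hθπ : θ ≤ π) :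
    ∑ k ∈ Finset.Icc 1 n, |1/(n:ℝ) + (2/(n:ℝ)) * ∑ m ∈ Finset.Icc 1 (n-1),
        cos ((m:ℝ) * ((2*(k:ℝ)-1)*π/(2*(n:ℝ)))) * cos ((m:ℝ)*θ)|
    ≤ (2/π) * Real.log n + 1 := by
  have hπ := pi_pos
  have hn0 : (0:ℝ) < n := by exact_mod_cast hn
  have hnne : (n:ℝ) ≠ 0 := ne_of_gt hn0
  by_cases hnode : ∃ j : ℕ, 1 ≤ j ∧ j ≤ n ∧ θ = (2*(j:ℝ)-1)*π/(2*(n:ℝ))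
  · obtain ⟨j, hj1, hj2, hθeq⟩ := hnode
    rw [hθeq, node_case hn hj1 hj2]
    have hlog : 0 ≤ Real.log n := Real.log_nonneg (by exact_mod_cast hn)
    have : 0 ≤ (2/π) * Real.log n := mul_nonneg (by positivity) hlog
    linarith
  · push_neg at hnode
    set j0 : ℤ := round ((n:ℝ)*θ/π) with hj0def
    set δ : ℝ := θ - (j0:ℝ)*π/(n:ℝ) with hδdef
    have hθδ : θ = (j0:ℝ)*π/(n:ℝ) + δ := by rw [hδdef]; ring
    have hδabs : |δ| ≤ π/(2*(n:ℝ)) := by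
      have hr := abs_sub_round ((n:ℝ)*θ/π)
      rw [← hj0def] at hr
      have heq2 : δ = (π/(n:ℝ)) * ((n:ℝ)*θ/π - (j0:ℝ)) := by
        rw [hδdef]; field_simp
      rw [heq2, abs_mul, abs_of_pos (by positivity : (0:ℝ) < π/(n:ℝ))]
      calc π/(n:ℝ) * |(n:ℝ)*θ/π - (j0:ℝ)| ≤ π/(n:ℝ) * (1/2) :=
            mul_le_mul_of_nonneg_left hr (by positivity)
      _ = π/(2*(n:ℝ)) := by ring
    have hnodeZ : ∀ r : ℤ, θ ≠ (2*(r:ℝ)-1)*π/(2*(n:ℝ)) := by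
      intro r hre
      have h2r : (0:ℝ) ≤ 2*(r:ℝ)-1 := by
        by_contra hc
        push_neg at hc
        have : θ < 0 := by
          rw [hre]
          apply div_neg_of_neg_of_pos (by nlinarith) (by positivity)
        linarith
      have h2rn : (2*(r:ℝ)-1) ≤ 2*(n:ℝ) := by
        by_contra hc
        push_neg at hc
        have : π < θ := by
          rw [hre, lt_div_iff₀ (by positivity)]
          nlinarith
        linarith
      have hr1 : 1 ≤ r := by
        have : (0:ℤ) ≤ 2*r - 1 := by exact_mod_cast h2r
        omega
      have hrn : r ≤ (n:ℤ) := by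
        have : (2*r - 1 : ℤ) ≤ 2*(n:ℤ) := by exact_mod_cast h2rn
        omega
      have hk1 : 1 ≤ r.toNat := by omega
      have hk2 : r.toNat ≤ n := by omega
      apply hnode r.toNat hk1 hk2
      rw [hre]
      have hkr : ((r.toNat:ℕ):ℝ) = (r:ℝ) := by exact_mod_cast Int.toNat_of_nonneg (by omega)
      rw [hkr]
    have hεlt : |δ|/2 < π/(4*(n:ℝ)) := by
      have hhalfq : π/(2*(n:ℝ)) = 2 * (π/(4*(n:ℝ))) := by field_simp; ring
      rcases lt_or_eq_of_le hδabs with h|h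
      · rw [hhalfq] at h; linarith
      · exfalso
        rcases (abs_eq (le_of_lt (by positivity : (0:ℝ) < π/(2*(n:ℝ))))).1 h with h1|h1
        · apply hnodeZ (j0 + 1)
          rw [hθδ, h1]
          push_cast
          field_simp
          ring
        · apply hnodeZ j0
          rw [hθδ, h1]
          push_cast
          field_simp
          ring
    -- reindexing
    set v : ℤ → ℝ := fun m => (2*(m:ℝ)+1)*π/(4*(n:ℝ)) + δ/2 with hvdef
    set f : ℤ → ℝ := fun m => |cos (v m)|/|sin (v m)| with hfdef
    have hv1 : ∀ k : ℕ, (θ - (2*(k:ℝ)-1)*π/(2*(n:ℝ)))/2 = v (j0 - (k:ℤ)) := by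
      intro k
      rw [hvdef]
      show (θ - (2*(k:ℝ)-1)*π/(2*(n:ℝ)))/2 = (2*((j0 - (k:ℤ) : ℤ):ℝ)+1)*π/(4*(n:ℝ)) + δ/2
      rw [hθδ]
      push_cast
      field_simp
      ring
    have hv2 : ∀ k : ℕ, (θ + (2*(k:ℝ)-1)*π/(2*(n:ℝ)))/2 = v (j0 + (k:ℤ) - 1) := by
      intro k
      rw [hvdef]
      show (θ + (2*(k:ℝ)-1)*π/(2*(n:ℝ)))/2 = (2*((j0 + (k:ℤ) - 1 : ℤ):ℝ)+1)*π/(4*(n:ℝ)) + δ/2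
      rw [hθδ]
      push_cast
      field_simp
      ring
    have hsum1 : ∑ k ∈ Finset.Icc 1 n, f (j0 - (k:ℤ))
        = ∑ m ∈ Finset.Ico (j0 - (n:ℤ)) j0, f m := by
      apply Finset.sum_nbij' (i := fun k : ℕ => j0 - (k:ℤ)) (j := fun m : ℤ => (j0 - m).toNat)
      · intro k hk
        rw [Finset.mem_Icc] at hk
        rw [Finset.mem_Ico]
        omega
      · intro m hm
        rw [Finset.mem_Ico] at hm
        rw [Finset.mem_Icc]
        omega
      · intro k hk
        rw [Finset.mem_Icc] at hk
        omega
      · intro m hm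
        rw [Finset.mem_Ico] at hm
        omega
      · intro k _
        rfl
    have hsum2 : ∑ k ∈ Finset.Icc 1 n, f (j0 + (k:ℤ) - 1)
        = ∑ m ∈ Finset.Ico j0 (j0 + (n:ℤ)), f m := by
      apply Finset.sum_nbij' (i := fun k : ℕ => j0 + (k:ℤ) - 1) (j := fun m : ℤ => (m - j0 + 1).toNat)
      · intro k hk
        rw [Finset.mem_Icc] at hk
        rw [Finset.mem_Ico]
        omega
      · intro m hm
        rw [Finset.mem_Ico] at hm
        rw [Finset.mem_Icc]
        omega
      · intro k hk
        rw [Finset.mem_Icc] at hk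
        omega
      · intro m hm
        rw [Finset.mem_Ico] at hm
        omega
      · intro k _
        rfl
    have hper : ∀ m : ℤ, f (m + 2*(n:ℤ)) = f m := by
      intro m
      have hvp : v (m + 2*(n:ℤ)) = v m + π := by
        rw [hvdef]
        show (2*((m + 2*(n:ℤ) : ℤ):ℝ)+1)*π/(4*(n:ℝ)) + δ/2
          = ((2*(m:ℝ)+1)*π/(4*(n:ℝ)) + δ/2) + π
        push_cast
        field_simp
        ring
      rw [hfdef]
      show |cos (v (m + 2*(n:ℤ)))|/|sin (v (m + 2*(n:ℤ)))| = |cos (v m)|/|sin (v m)|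
      have h1 : cos (v (m + 2*(n:ℤ))) = -cos (v m) := by rw [hvp, cos_add, cos_pi, sin_pi]; ring
      have h2 : sin (v (m + 2*(n:ℤ))) = -sin (v m) := by rw [hvp, sin_add, cos_pi, sin_pi]; ring
      rw [h1, h2, abs_neg, abs_neg]
    have hshift : ∑ m ∈ Finset.Ico (j0 - (n:ℤ)) (j0 + (n:ℤ)), f m
        = ∑ m ∈ Finset.Ico (0:ℤ) (2*(n:ℤ)), f m := by
      have h := shift_sum (2*(n:ℤ)) (by omega) f hper (j0 - (n:ℤ))
      rw [show j0 - (n:ℤ) + 2*(n:ℤ) = j0 + (n:ℤ) by ring] at h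
      exact h
    have hunion : ∑ m ∈ Finset.Ico (j0 - (n:ℤ)) j0, f m + ∑ m ∈ Finset.Ico j0 (j0 + (n:ℤ)), f m
        = ∑ m ∈ Finset.Ico (j0 - (n:ℤ)) (j0 + (n:ℤ)), f m := by
      rw [← Finset.sum_union (Finset.Ico_disjoint_Ico_consecutive _ _ _),
        Finset.Ico_union_Ico_eq_Ico (by omega) (by omega)]
    have hunion2 : ∑ m ∈ Finset.Ico (0:ℤ) (2*(n:ℤ)), f m
        = ∑ m ∈ Finset.Ico (0:ℤ) (n:ℤ), f m + ∑ m ∈ Finset.Ico (n:ℤ) (2*(n:ℤ)), f m := by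
      rw [← Finset.sum_union (Finset.Ico_disjoint_Ico_consecutive _ _ _),
        Finset.Ico_union_Ico_eq_Ico (by omega) (by omega)]
    have hhalf1 : ∑ m ∈ Finset.Ico (0:ℤ) (n:ℤ), f m
        = ∑ s ∈ Finset.range n,
          |cos ((2*(s:ℝ)+1)*π/(4*(n:ℝ)) + δ/2)|/|sin ((2*(s:ℝ)+1)*π/(4*(n:ℝ)) + δ/2)| := by
      apply Finset.sum_nbij' (i := fun m : ℤ => m.toNat) (j := fun s : ℕ => (s:ℤ))
      · intro m hm
        rw [Finset.mem_Ico] at hm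
        rw [Finset.mem_range]
        omega
      · intro s hs
        rw [Finset.mem_range] at hs
        rw [Finset.mem_Ico]
        omega
      · intro m hm
        rw [Finset.mem_Ico] at hm
        omega
      · intro s _
        omega
      · intro m hm
        rw [Finset.mem_Ico] at hm
        have hmm : ((m.toNat:ℕ):ℝ) = (m:ℝ) := by exact_mod_cast Int.toNat_of_nonneg hm.1
        simp only [hfdef, hvdef]
        rw [hmm]
    have hhalf2 : ∑ m ∈ Finset.Ico (n:ℤ) (2*(n:ℤ)), f m
        = ∑ s ∈ Finset.range n,
          |cos ((2*(s:ℝ)+1)*π/(4*(n:ℝ)) - δ/2)|/|sin ((2*(s:ℝ)+1)*π/(4*(n:ℝ)) - δ/2)| := by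
      apply Finset.sum_nbij' (i := fun m : ℤ => (2*(n:ℤ)-1-m).toNat)
        (j := fun s : ℕ => 2*(n:ℤ)-1-(s:ℤ))
      · intro m hm
        rw [Finset.mem_Ico] at hm
        have h0 : (0:ℤ) ≤ 2*(n:ℤ)-1-m := by omega
        rw [Finset.mem_range, ← Nat.cast_lt (α := ℤ), Int.toNat_of_nonneg h0]
        omega
      · intro s hs
        rw [Finset.mem_range] at hs
        rw [Finset.mem_Ico]
        omega
      · intro m hm
        rw [Finset.mem_Ico] at hm
        have h0 : (0:ℤ) ≤ 2*(n:ℤ)-1-m := by omega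
        rw [Int.toNat_of_nonneg h0]
        ring
      · intro s hs
        rw [Finset.mem_range] at hs
        have harg : 2*(n:ℤ)-1-(2*(n:ℤ)-1-(s:ℤ)) = (s:ℤ) := by ring
        rw [harg]
        omega
      · intro m hm
        rw [Finset.mem_Ico] at hm
        have harg : (2*(((2*(n:ℤ)-1-m).toNat:ℕ):ℝ)+1)*π/(4*(n:ℝ)) - δ/2 = π - v m := by
          have hmm : (((2*(n:ℤ)-1-m).toNat:ℕ):ℝ) = 2*(n:ℝ)-1-(m:ℝ) := by
            have h0 : (0:ℤ) ≤ 2*(n:ℤ)-1-m := by omega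
            rw [show (((2*(n:ℤ)-1-m).toNat:ℕ):ℝ) = ((((2*(n:ℤ)-1-m).toNat:ℕ):ℤ):ℝ) from by
              norm_cast]
            rw [Int.toNat_of_nonneg h0]
            push_cast
            ring
          rw [hmm, hvdef]
          show (2*(2*(n:ℝ)-1-(m:ℝ))+1)*π/(4*(n:ℝ)) - δ/2
            = π - ((2*(m:ℝ)+1)*π/(4*(n:ℝ)) + δ/2)
          field_simp
          ring
        rw [hfdef]
        show |cos (v m)|/|sin (v m)| = _
        rw [harg, cos_pi_sub, sin_pi_sub, abs_neg]
    -- the per-k inequality and assembly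
    have hstep1 : ∑ k ∈ Finset.Icc 1 n, |1/(n:ℝ) + (2/(n:ℝ)) * ∑ m ∈ Finset.Icc 1 (n-1),
          cos ((m:ℝ) * ((2*(k:ℝ)-1)*π/(2*(n:ℝ)))) * cos ((m:ℝ)*θ)|
        ≤ ∑ k ∈ Finset.Icc 1 n, (|cos ((n:ℝ)*θ)|/(2*(n:ℝ)) * (f (j0 - (k:ℤ)) + f (j0 + (k:ℤ) - 1))) := by
      apply Finset.sum_le_sum
      intro k hk
      rw [Finset.mem_Icc] at hk
      have hne : θ ≠ (2*(k:ℝ)-1)*π/(2*(n:ℝ)) := by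
        intro hcon
        exact hnode k hk.1 hk.2 hcon
      have hb := per_k hn hk.1 hk.2 hθ0 hθπ hne
      calc |1/(n:ℝ) + (2/(n:ℝ)) * ∑ m ∈ Finset.Icc 1 (n-1),
          cos ((m:ℝ) * ((2*(k:ℝ)-1)*π/(2*(n:ℝ)))) * cos ((m:ℝ)*θ)|
          ≤ |cos ((n:ℝ)*θ)|/(2*(n:ℝ)) *
            (|cos ((θ - (2*(k:ℝ)-1)*π/(2*(n:ℝ)))/2)|/|sin ((θ - (2*(k:ℝ)-1)*π/(2*(n:ℝ)))/2)|
             + |cos ((θ + (2*(k:ℝ)-1)*π/(2*(n:ℝ)))/2)|/|sin ((θ + (2*(k:ℝ)-1)*π/(2*(n:ℝ)))/2)|) := hb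
      _ = |cos ((n:ℝ)*θ)|/(2*(n:ℝ)) * (f (j0 - (k:ℤ)) + f (j0 + (k:ℤ) - 1)) := by
          rw [hfdef]
          show _ = |cos ((n:ℝ)*θ)|/(2*(n:ℝ)) *
            (|cos (v (j0 - (k:ℤ)))|/|sin (v (j0 - (k:ℤ)))|
             + |cos (v (j0 + (k:ℤ) - 1))|/|sin (v (j0 + (k:ℤ) - 1))|)
          rw [← hv1 k, ← hv2 k]
    -- |cos(nθ)| = cos (2 n ε)
    have hcosn : |cos ((n:ℝ)*θ)| = cos (2*((n:ℝ)*(|δ|/2))) := by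
      have hnθ : (n:ℝ)*θ = (n:ℝ)*δ + (j0:ℝ)*π := by rw [hθδ]; field_simp; ring
      have hsj0 : sin ((j0:ℝ)*π) = 0 := Real.sin_int_mul_pi j0
      have h4 := sin_sq_add_cos_sq ((j0:ℝ)*π)
      rw [hsj0] at h4
      have h5 : (cos ((j0:ℝ)*π) - 1)*(cos ((j0:ℝ)*π)+1) = 0 := by nlinarith
      have hconδ : cos ((n:ℝ)*θ) = cos ((n:ℝ)*δ) * cos ((j0:ℝ)*π) := by
        rw [hnθ, cos_add, hsj0]; ring
      have habs1 : |cos ((n:ℝ)*θ)| = |cos ((n:ℝ)*δ)| := by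
        rw [hconδ, abs_mul]
        rcases mul_eq_zero.1 h5 with h|h
        · rw [show cos ((j0:ℝ)*π) = 1 by linarith]; simp
        · rw [show cos ((j0:ℝ)*π) = -1 by linarith]; simp
      have hnδ : |(n:ℝ)*δ| ≤ π/2 := by
        rw [abs_mul, abs_of_pos hn0]
        have h6 := mul_le_mul_of_nonneg_left hδabs (le_of_lt hn0)
        calc (n:ℝ)*|δ| ≤ (n:ℝ)*(π/(2*(n:ℝ))) := h6
        _ = π/2 := by field_simp
      have hccpos : 0 ≤ cos ((n:ℝ)*δ) := by
        apply cos_nonneg_of_mem_Icc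
        have := abs_le.1 hnδ
        constructor <;> linarith [this.1, this.2]
      rw [habs1, abs_of_nonneg hccpos]
      rw [show 2*((n:ℝ)*(|δ|/2)) = (n:ℝ)*|δ| by ring,
        show (n:ℝ)*|δ| = |(n:ℝ)*δ| by rw [abs_mul, abs_of_pos hn0], Real.cos_abs]
    -- final calc
    have hfrac : ∀ s : ℕ, s ∈ Finset.range n →
        cos (2*((n:ℝ)*(|δ|/2))) *
          (|cos ((2*(s:ℝ)+1)*π/(4*(n:ℝ)) + δ/2)|/|sin ((2*(s:ℝ)+1)*π/(4*(n:ℝ)) + δ/2)|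
           + |cos ((2*(s:ℝ)+1)*π/(4*(n:ℝ)) - δ/2)|/|sin ((2*(s:ℝ)+1)*π/(4*(n:ℝ)) - δ/2)|)
        ≤ 2 * (cos ((2*(s:ℝ)+1)*π/(4*(n:ℝ))) / sin ((2*(s:ℝ)+1)*π/(4*(n:ℝ)))) := by
      intro s hs
      rw [Finset.mem_range] at hs
      have hs1 : (s:ℝ) ≤ (n:ℝ) - 1 := by
        have : (s:ℝ) + 1 ≤ (n:ℝ) := by exact_mod_cast hs
        linarith
      apply per_s hn hεlt
      · rw [div_le_div_iff₀ (by positivity) (by positivity)]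
        have hs0 : (0:ℝ) ≤ 2*(s:ℝ) := by positivity
        nlinarith [mul_nonneg (mul_nonneg hs0 (le_of_lt hπ))
          (by positivity : (0:ℝ) ≤ 4*(n:ℝ))]
      · have hb2 : (2*(s:ℝ)+1)*π/(4*(n:ℝ)) ≤ (2*(n:ℝ)-1)*π/(4*(n:ℝ)) := by
          have hnum : (2*(s:ℝ)+1)*π ≤ (2*(n:ℝ)-1)*π := by nlinarith
          exact (div_le_div_iff_of_pos_right (by positivity)).2 hnum
        have hsum3 : (2*(n:ℝ)-1)*π/(4*(n:ℝ)) + π/(4*(n:ℝ)) = π/2 := by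
          field_simp; ring
        linarith [le_of_lt hεlt]
    calc ∑ k ∈ Finset.Icc 1 n, |1/(n:ℝ) + (2/(n:ℝ)) * ∑ m ∈ Finset.Icc 1 (n-1),
          cos ((m:ℝ) * ((2*(k:ℝ)-1)*π/(2*(n:ℝ)))) * cos ((m:ℝ)*θ)|
        ≤ ∑ k ∈ Finset.Icc 1 n, (|cos ((n:ℝ)*θ)|/(2*(n:ℝ)) * (f (j0 - (k:ℤ)) + f (j0 + (k:ℤ) - 1))) := hstep1
    _ = |cos ((n:ℝ)*θ)|/(2*(n:ℝ)) * (∑ k ∈ Finset.Icc 1 n, f (j0 - (k:ℤ))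
          + ∑ k ∈ Finset.Icc 1 n, f (j0 + (k:ℤ) - 1)) := by
        rw [← Finset.mul_sum, Finset.sum_add_distrib]
    _ = |cos ((n:ℝ)*θ)|/(2*(n:ℝ)) *
          (∑ s ∈ Finset.range n,
            |cos ((2*(s:ℝ)+1)*π/(4*(n:ℝ)) + δ/2)|/|sin ((2*(s:ℝ)+1)*π/(4*(n:ℝ)) + δ/2)|
          + ∑ s ∈ Finset.range n,
            |cos ((2*(s:ℝ)+1)*π/(4*(n:ℝ)) - δ/2)|/|sin ((2*(s:ℝ)+1)*π/(4*(n:ℝ)) - δ/2)|) := by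
        rw [hsum1, hsum2, hunion, hshift, hunion2, hhalf1, hhalf2]
    _ = (1/(2*(n:ℝ))) * ∑ s ∈ Finset.range n, (cos (2*((n:ℝ)*(|δ|/2))) *
          (|cos ((2*(s:ℝ)+1)*π/(4*(n:ℝ)) + δ/2)|/|sin ((2*(s:ℝ)+1)*π/(4*(n:ℝ)) + δ/2)|
          + |cos ((2*(s:ℝ)+1)*π/(4*(n:ℝ)) - δ/2)|/|sin ((2*(s:ℝ)+1)*π/(4*(n:ℝ)) - δ/2)|)) := by
        rw [hcosn, ← Finset.sum_add_distrib, Finset.mul_sum, Finset.mul_sum]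
        apply Finset.sum_congr rfl
        intro s _
        ring
    _ ≤ (1/(2*(n:ℝ))) * ∑ s ∈ Finset.range n,
          (2 * (cos ((2*(s:ℝ)+1)*π/(4*(n:ℝ))) / sin ((2*(s:ℝ)+1)*π/(4*(n:ℝ))))) :=
        mul_le_mul_of_nonneg_left (Finset.sum_le_sum hfrac) (by positivity)
    _ = (1/(n:ℝ)) * ∑ s ∈ Finset.range n,
          (cos ((2*(s:ℝ)+1)*π/(4*(n:ℝ))) / sin ((2*(s:ℝ)+1)*π/(4*(n:ℝ)))) := by
        rw [← Finset.mul_sum]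
        ring
    _ ≤ (1/(n:ℝ)) * ((n:ℝ) * ((2/π) * Real.log n + 1)) :=
        mul_le_mul_of_nonneg_left (static_bound n hn) (by positivity)
    _ = (2/π) * Real.log n + 1 := by
        field_simp
end S5

/-- The ℓ1 norm of the vector of scaled Chebyshev basis polynomials evaluated at any
point of `[α, β]` is at most `(2/π)·log(n) + 1`. -/
theorem scaled_cheb_basis_abs_sum_le (n : ℕ) (hn : 1 ≤ n)
    (α β : ℝ) (hab : α < β) (x : ℝ) (hx : x ∈ Set.Icc α β) :
    ∑ k ∈ Finset.Icc 1 n, |scaledChebBasis n k α β x| ≤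
      (2 / Real.pi) * Real.log n + 1 := by
  have hπ := Real.pi_pos
  have hd : α - β < 0 := by linarith
  have ht1 : -1 ≤ (2*x - (α+β))/(α-β) := by
    rw [le_div_iff_of_neg hd]
    obtain ⟨hx1, hx2⟩ := hx
    linarith
  have ht2 : (2*x - (α+β))/(α-β) ≤ 1 := by
    rw [div_le_iff_of_neg hd]
    obtain ⟨hx1, hx2⟩ := hx
    linarith
  set θ : ℝ := Real.arccos ((2*x - (α+β))/(α-β)) with hθdef
  have hθcos : Real.cos θ = (2*x - (α+β))/(α-β) := Real.cos_arccos ht1 ht2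
  have hθ0 : 0 ≤ θ := Real.arccos_nonneg _
  have hθπ : θ ≤ π := Real.arccos_le_pi _
  have hrw : ∀ k ∈ Finset.Icc 1 n, scaledChebBasis n k α β x
      = 1/(n:ℝ) + (2/(n:ℝ)) * ∑ m ∈ Finset.Icc 1 (n-1),
        cos ((m:ℝ) * ((2*(k:ℝ)-1)*π/(2*(n:ℝ)))) * cos ((m:ℝ)*θ) := by
    intro k _
    have hterm : ∀ m ∈ Finset.Icc 1 (n-1),
        chebT m (chebNode n k) * chebT m ((2 * x - (α + β)) / (α - β))
        = cos ((m:ℝ) * ((2*(k:ℝ)-1)*π/(2*(n:ℝ)))) * cos ((m:ℝ)*θ) := by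
      intro m _
      have h1 : (2 * x - (α + β)) / (α - β) = Real.cos θ := by
        rw [hθcos]
      simp only [chebT, chebNode]
      rw [h1, Polynomial.Chebyshev.T_real_cos, Polynomial.Chebyshev.T_real_cos]
      push_cast
      ring
    simp only [scaledChebBasis]
    rw [Finset.sum_congr rfl hterm]
  rw [Finset.sum_congr rfl (fun k hk => by rw [hrw k hk])]
  exact main_core hn hθ0 hθπ
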